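/- Let A, B be disjoint finite sets, j and i two further distinct elements not in A ∪ B, and k an odd positive integer. The probability, over a uniformly random permutation of A ∪ B ∪ {j, i}, that exactly (k−1)/2 elements of A, exactly (k−1)/2 elements of B, and the element j all precede i, equals (1/(|A|+|B|+2)) · C(|A|+|B|+1, k)⁻¹ · C(|A|, (k−1)/2) · C(|B|, (k−1)/2). -/

import Mathlib

open Finset Nat

theorem fiber_count {α : Type*} [Fintype α] [DecidableEq α] {n k : ℕ}
    (hcard : Fintype.card α = n) (hk : k < n) (i : α) (D : Finset α)
    (hiD : i ∉ D) (hDcard : D.card = k) :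
    Nat.card {π : α ≃ Fin n // Finset.univ.filter (fun x => π x < π i) = D}
      = k ! * (n - 1 - k)! := by
  set κ : Fin n := ⟨k, hk⟩ with hκ
  set C : Finset α := Dᶜ.erase i with hC
  have hCcard : C.card = n - 1 - k := by
    rw [hC, Finset.card_erase_of_mem (by simpa using hiD), Finset.card_compl, hDcard, hcard]
    omega
  have hreg : ∀ x : α, x ∉ D → x ∉ C → x = i := by
    intro x hxD hxC
    by_contra hxi
    exact hxC (Finset.mem_erase.2 ⟨hxi, by simpa using hxD⟩)
  -- the gluing function
  set p : ((↥D ≃ ↥(Finset.Iio κ)) × (↥C ≃ ↥(Finset.Ioi κ))) → α → Fin n :=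
    fun fg x => if h : x ∈ D then (fg.1 ⟨x, h⟩ : Fin n)
      else if h' : x ∈ C then (fg.2 ⟨x, h'⟩ : Fin n) else κ with hp
  have hval1 : ∀ fg x (h : x ∈ D), p fg x = (fg.1 ⟨x, h⟩ : Fin n) := by
    intro fg x h; simp [hp, h]
  have hval2 : ∀ fg x (h' : x ∈ C), p fg x = (fg.2 ⟨x, h'⟩ : Fin n) := by
    intro fg x h'
    have hxD : x ∉ D := by
      have := Finset.mem_erase.1 h'
      simpa using this.2
    simp [hp, hxD, h']
  have hval3 : ∀ fg, p fg i = κ := by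
    intro fg
    have hiC : i ∉ C := fun h => (Finset.mem_erase.1 h).1 rfl
    simp [hp, hiD, hiC]
  have hlt1 : ∀ fg x (h : x ∈ D), p fg x < κ := by
    intro fg x h; rw [hval1 fg x h]; exact Finset.mem_Iio.1 (fg.1 ⟨x, h⟩).2
  have hlt2 : ∀ fg x (h : x ∈ C), κ < p fg x := by
    intro fg x h; rw [hval2 fg x h]; exact Finset.mem_Ioi.1 (fg.2 ⟨x, h⟩).2
  have hpinj : ∀ fg, Function.Injective (p fg) := by
    intro fg x y hxy
    by_cases hx : x ∈ D <;> by_cases hy : y ∈ D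
    · rw [hval1 fg x hx, hval1 fg y hy] at hxy
      have := fg.1.injective (Subtype.ext hxy)
      exact congrArg Subtype.val this
    · by_cases hy' : y ∈ C
      · have := hlt1 fg x hx; have := hlt2 fg y hy'; rw [hxy] at *; omega
      · have := hreg y hy hy'; subst this
        have := hlt1 fg x hx; rw [hxy, hval3] at this; omega
    · by_cases hx' : x ∈ C
      · have := hlt2 fg x hx'; have := hlt1 fg y hy; rw [hxy] at *; omega
      · have := hreg x hx hx'; subst this
        have := hlt1 fg y hy; rw [← hxy, hval3] at this; omega
    · by_cases hx' : x ∈ C <;> by_cases hy' : y ∈ C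
      · rw [hval2 fg x hx', hval2 fg y hy'] at hxy
        have := fg.2.injective (Subtype.ext hxy)
        exact congrArg Subtype.val this
      · have := hreg y hy hy'; subst this
        have := hlt2 fg x hx'; rw [hxy, hval3] at this; omega
      · have := hreg x hx hx'; subst this
        have := hlt2 fg y hy'; rw [← hxy, hval3] at this; omega
      · rw [hreg x hx hx', hreg y hy hy']
  have hpbij : ∀ fg, Function.Bijective (p fg) := by
    intro fg
    rw [Fintype.bijective_iff_injective_and_card]
    exact ⟨hpinj fg, by simp [hcard]⟩
  set Φ : ((↥D ≃ ↥(Finset.Iio κ)) × (↥C ≃ ↥(Finset.Ioi κ))) →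
      {π : α ≃ Fin n // Finset.univ.filter (fun x => π x < π i) = D} :=
    fun fg => ⟨Equiv.ofBijective (p fg) (hpbij fg), by
      ext x
      simp only [Finset.mem_filter, Finset.mem_univ, true_and, Equiv.ofBijective_apply]
      rw [hval3 fg]
      constructor
      · intro hx
        by_contra hxD
        by_cases hx' : x ∈ C
        · have := hlt2 fg x hx'; omega
        · rw [hreg x hxD hx', hval3 fg] at hx; omega
      · intro hx; exact hlt1 fg x hx⟩ with hΦ
  have hΦbij : Function.Bijective Φ := by
    constructor
    · rintro ⟨f, g⟩ ⟨f', g'⟩ h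
      have hfun : ∀ x, p (f, g) x = p (f', g') x := by
        intro x
        have := congrArg (fun z => (z : {π : α ≃ Fin n // _}).1 x) h
        simpa [hΦ] using this
      have hf : f = f' := by
        apply Equiv.ext; rintro ⟨x, hx⟩
        apply Subtype.ext
        have := hfun x
        rwa [hval1 (f, g) x hx, hval1 (f', g') x hx] at this
      have hg : g = g' := by
        apply Equiv.ext; rintro ⟨x, hx⟩
        apply Subtype.ext
        have := hfun x
        rwa [hval2 (f, g) x hx, hval2 (f', g') x hx] at this
      rw [Prod.ext_iff]; exact ⟨hf, hg⟩
    · rintro ⟨π, hπ⟩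
      have hmem : ∀ x, x ∈ D ↔ π x < π i := by
        intro x; conv_lhs => rw [← hπ]
        simp
      have hπi : π i = κ := by
        have himg : D.image π = Finset.Iio (π i) := by
          ext v
          simp only [Finset.mem_image, Finset.mem_Iio]
          constructor
          · rintro ⟨x, hx, rfl⟩; exact (hmem x).1 hx
          · intro hv; exact ⟨π.symm v, (hmem _).2 (by simpa using hv), by simp⟩
        have : k = ((π i : Fin n) : ℕ) := by
          rw [← hDcard, ← Finset.card_image_of_injective D π.injective, himg, Fin.card_Iio]
        exact (Fin.ext this.symm)
      refine ⟨(⟨fun x => ⟨π x, ?_⟩, fun v => ⟨π.symm v, ?_⟩, ?_, ?_⟩,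
               ⟨fun x => ⟨π x, ?_⟩, fun v => ⟨π.symm v, ?_⟩, ?_, ?_⟩), ?_⟩
      · have := (hmem x).1 x.2; rw [hπi] at this; simpa using this
      · have hv := Finset.mem_Iio.1 v.2
        exact (hmem _).2 (by simpa [hπi] using hv)
      · intro x; apply Subtype.ext; simp
      · intro v; apply Subtype.ext; simp
      · obtain ⟨hxi, hxD⟩ := Finset.mem_erase.1 x.2
        have hxD' : (x : α) ∉ D := by simpa using hxD
        have h1 : ¬ π x < π i := fun h => hxD' ((hmem _).2 h)
        have h2 : π x ≠ π i := fun h => hxi (π.injective h)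
        have : π i < π x := lt_of_le_of_ne (not_lt.1 h1) (Ne.symm h2)
        rw [hπi] at this; simpa using this
      · have hv := Finset.mem_Ioi.1 v.2
        refine Finset.mem_erase.2 ⟨?_, ?_⟩
        · intro h
          have h2 : (v : Fin n) = π i := by rw [← h]; simp
          rw [hπi] at h2
          rw [h2] at hv
          exact lt_irrefl _ hv
        · simp only [Finset.mem_compl]
          intro h
          have := (hmem _).1 h
          rw [hπi] at this; simp at this; omega
      · intro x; apply Subtype.ext; simp
      · intro v; apply Subtype.ext; simp
      · apply Subtype.ext
        apply Equiv.ext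
        intro x
        show p _ x = π x
        by_cases hx : x ∈ D
        · rw [hval1 _ x hx]
          rfl
        · by_cases hx' : x ∈ C
          · rw [hval2 _ x hx']
            rfl
          · rw [hreg x hx hx', hval3, hπi]
  rw [← Nat.card_eq_of_bijective Φ hΦbij, Nat.card_prod,
    Nat.card_eq_fintype_card, Nat.card_eq_fintype_card]
  have hIio : Fintype.card ↥(Finset.Iio κ) = k := by rw [Fintype.card_coe, Fin.card_Iio]
  have hIoi : Fintype.card ↥(Finset.Ioi κ) = n - 1 - k := by rw [Fintype.card_coe, Fin.card_Ioi]
  rw [Fintype.card_equiv (Fintype.equivOfCardEq (by rw [Fintype.card_coe, hDcard, hIio])),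
    Fintype.card_equiv (Fintype.equivOfCardEq (by rw [Fintype.card_coe, hCcard, hIoi]))]
  rw [Fintype.card_coe, Fintype.card_coe, hDcard, hCcard]

/-- The probability, over a uniformly random permutation of `A ∪ B ∪ {j, i}`, that exactly
`(k−1)/2` elements of `A`, exactly `(k−1)/2` elements of `B`, and the element `j` all
precede `i`, equals `(1/(|A|+|B|+2))·C(|A|+|B|+1,k)⁻¹·C(|A|,(k−1)/2)·C(|B|,(k−1)/2)`. -/
theorem stmt10 {α : Type*} [Fintype α] [DecidableEq α] (A B : Finset α) (i j : α)
    (hAB : Disjoint A B) (hiA : i ∉ A) (hiB : i ∉ B) (hjA : j ∉ A) (hjB : j ∉ B)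
    (hij : i ≠ j) (hcover : A ∪ B ∪ {j, i} = Finset.univ)
    (k : ℕ) (hk : Odd k) (hkpos : 0 < k) :
    (Nat.card {π : α ≃ Fin (Fintype.card α) //
        (A.filter (fun x => π x < π i)).card = (k - 1) / 2 ∧
        (B.filter (fun x => π x < π i)).card = (k - 1) / 2 ∧
        π j < π i} : ℝ) / (Fintype.card α).factorial =
    (1 / ((A.card : ℝ) + (B.card : ℝ) + 2)) * ((A.card + B.card + 1).choose k : ℝ)⁻¹ *
      (A.card.choose ((k - 1) / 2) : ℝ) * (B.card.choose ((k - 1) / 2) : ℝ) := by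
  classical
  obtain ⟨t, ht⟩ := hk
  set m := (k - 1) / 2 with hm
  have hk2 : k = 2 * m + 1 := by omega
  by_cases hma : m ≤ A.card ∧ m ≤ B.card
  · obtain ⟨hma, hmb⟩ := hma
    -- cardinality of the universe
    have hn : Fintype.card α = A.card + B.card + 2 := by
      have hd1 : Disjoint (A ∪ B) ({j, i} : Finset α) := by
        simp only [Finset.disjoint_right, Finset.mem_insert, Finset.mem_singleton,
          Finset.mem_union]
        rintro x (rfl | rfl) <;> tauto
      have := congrArg Finset.card hcover
      rw [Finset.card_union_of_disjoint hd1, Finset.card_union_of_disjoint hAB,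
        Finset.card_insert_of_notMem (by simpa using Ne.symm hij),
        Finset.card_singleton, Finset.card_univ] at this
      omega
    have hkn : k < Fintype.card α := by omega
    -- the main count
    have hcount : Nat.card {π : α ≃ Fin (Fintype.card α) //
        (A.filter (fun x => π x < π i)).card = m ∧
        (B.filter (fun x => π x < π i)).card = m ∧
        π j < π i} = (A.card.choose m * B.card.choose m) *
          (k ! * (Fintype.card α - 1 - k)!) := by
      rw [Nat.card_eq_fintype_card, Fintype.card_subtype]
      set Fm : (α ≃ Fin (Fintype.card α)) → Finset α :=
        fun π => Finset.univ.filter (fun x => π x < π i) with hFm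
      have hFmA : ∀ π, Fm π ∩ A = A.filter (fun x => π x < π i) := by
        intro π; ext x; simp [hFm, and_comm]
      have hFmB : ∀ π, Fm π ∩ B = B.filter (fun x => π x < π i) := by
        intro π; ext x; simp [hFm, and_comm]
      set T : Finset (Finset α) := Finset.univ.filter
        (fun D => j ∈ D ∧ i ∉ D ∧ (D ∩ A).card = m ∧ (D ∩ B).card = m) with hT
      have hTmem : ∀ D ∈ T, j ∈ D ∧ i ∉ D ∧ (D ∩ A).card = m ∧ (D ∩ B).card = m := by
        intro D hD; simpa [hT] using hD
      -- each valid D has card k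
      have hDcard : ∀ D ∈ T, D.card = k := by
        intro D hD
        obtain ⟨hjD, hiD, hDA, hDB⟩ := hTmem D hD
        have hdec : D = (D ∩ A) ∪ (D ∩ B) ∪ {j} := by
          have h1 : D = D ∩ (A ∪ B ∪ {j, i}) := by rw [hcover]; simp
          have h2 : D ∩ ({j, i} : Finset α) = {j} := by
            ext x
            simp only [Finset.mem_inter, Finset.mem_insert, Finset.mem_singleton]
            constructor
            · rintro ⟨hx, rfl | rfl⟩
              · rfl
              · exact absurd hx hiD
            · rintro rfl; exact ⟨hjD, Or.inl rfl⟩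
          conv_lhs => rw [h1, Finset.inter_union_distrib_left, Finset.inter_union_distrib_left, h2]
        have hd1 : Disjoint (D ∩ A) (D ∩ B) :=
          hAB.mono (Finset.inter_subset_right) (Finset.inter_subset_right)
        have hd2 : Disjoint ((D ∩ A) ∪ (D ∩ B)) ({j} : Finset α) := by
          simp only [Finset.disjoint_right, Finset.mem_singleton, Finset.mem_union,
            Finset.mem_inter]
          rintro x rfl; tauto
        rw [hdec, Finset.card_union_of_disjoint hd2, Finset.card_union_of_disjoint hd1,
          hDA, hDB, Finset.card_singleton]
        omega
      rw [Finset.card_eq_sum_card_fiberwise (f := Fm) (t := T) ?hmap]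
      case hmap =>
        intro π hπ
        simp only [Finset.mem_coe, Finset.mem_filter, Finset.mem_univ, true_and] at hπ
        obtain ⟨h1, h2, h3⟩ := hπ
        simp only [hT, Finset.mem_coe, Finset.mem_filter, Finset.mem_univ, true_and]
        refine ⟨by simp [hFm, h3], by simp [hFm], ?_, ?_⟩
        · rw [hFmA]; exact h1
        · rw [hFmB]; exact h2
      have hfiber : ∀ D ∈ T,
          ((Finset.univ.filter (fun π : α ≃ Fin (Fintype.card α) =>
            (A.filter (fun x => π x < π i)).card = m ∧
            (B.filter (fun x => π x < π i)).card = m ∧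
            π j < π i)).filter (fun π => Fm π = D)).card
          = k ! * (Fintype.card α - 1 - k)! := by
        intro D hD
        obtain ⟨hjD, hiD, hDA, hDB⟩ := hTmem D hD
        have heq : ((Finset.univ.filter (fun π : α ≃ Fin (Fintype.card α) =>
            (A.filter (fun x => π x < π i)).card = m ∧
            (B.filter (fun x => π x < π i)).card = m ∧
            π j < π i)).filter (fun π => Fm π = D))
            = Finset.univ.filter (fun π => Fm π = D) := by
          rw [Finset.filter_filter]
          apply Finset.filter_congr
          intro π _
          constructor
          · tauto
          · intro hFmπ
            refine ⟨⟨?_, ?_, ?_⟩, hFmπ⟩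
            · rw [← hFmA, hFmπ]; exact hDA
            · rw [← hFmB, hFmπ]; exact hDB
            · have : j ∈ Fm π := hFmπ ▸ hjD
              simpa [hFm] using this
        rw [heq]
        have := fiber_count (α := α) rfl hkn i D hiD (hDcard D hD)
        rw [Nat.card_eq_fintype_card, Fintype.card_subtype] at this
        exact this
      rw [Finset.sum_congr rfl hfiber, Finset.sum_const, smul_eq_mul]
      congr 1
      -- T.card = choose * choose
      have : T.card = (A.powersetCard m ×ˢ B.powersetCard m).card := by
        apply Finset.card_bij' (fun D _ => (D ∩ A, D ∩ B))
          (fun P _ => P.1 ∪ P.2 ∪ {j})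
        · intro D hD
          obtain ⟨hjD, hiD, hDA, hDB⟩ := hTmem D hD
          simp only [Finset.mem_product, Finset.mem_powersetCard]
          exact ⟨⟨Finset.inter_subset_right, hDA⟩, ⟨Finset.inter_subset_right, hDB⟩⟩
        · rintro ⟨S, U⟩ hP
          simp only [Finset.mem_product, Finset.mem_powersetCard] at hP
          obtain ⟨⟨hSA, hSm⟩, ⟨hUB, hUm⟩⟩ := hP
          simp only [hT, Finset.mem_filter, Finset.mem_univ, true_and]
          have hSU_A : (S ∪ U ∪ {j}) ∩ A = S := by
            ext x
            simp only [Finset.mem_inter, Finset.mem_union, Finset.mem_singleton]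
            constructor
            · rintro ⟨(hx | hx) | rfl, hxA⟩
              · exact hx
              · exact absurd hxA (Finset.disjoint_right.1 hAB (hUB hx))
              · exact absurd hxA hjA
            · intro hx; exact ⟨Or.inl (Or.inl hx), hSA hx⟩
          have hSU_B : (S ∪ U ∪ {j}) ∩ B = U := by
            ext x
            simp only [Finset.mem_inter, Finset.mem_union, Finset.mem_singleton]
            constructor
            · rintro ⟨(hx | hx) | rfl, hxB⟩
              · exact absurd hxB (Finset.disjoint_left.1 hAB (hSA hx))
              · exact hx
              · exact absurd hxB hjB
            · intro hx; exact ⟨Or.inl (Or.inr hx), hUB hx⟩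
          refine ⟨by simp, ?_, by rw [hSU_A]; exact hSm, by rw [hSU_B]; exact hUm⟩
          simp only [Finset.mem_union, Finset.mem_singleton]
          push_neg
          exact ⟨⟨fun h => hiA (hSA h), fun h => hiB (hUB h)⟩, hij⟩
        · intro D hD
          obtain ⟨hjD, hiD, hDA, hDB⟩ := hTmem D hD
          -- (D∩A) ∪ (D∩B) ∪ {j} = D
          ext x
          simp only [Finset.mem_union, Finset.mem_inter, Finset.mem_singleton]
          constructor
          · rintro ((⟨hx, _⟩ | ⟨hx, _⟩) | rfl)
            · exact hx
            · exact hx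
            · exact hjD
          · intro hx
            have hx' : x ∈ A ∪ B ∪ {j, i} := by rw [hcover]; simp
            simp only [Finset.mem_union, Finset.mem_insert, Finset.mem_singleton] at hx'
            rcases hx' with ((h | h) | (h | h))
            · exact Or.inl (Or.inl ⟨hx, h⟩)
            · exact Or.inl (Or.inr ⟨hx, h⟩)
            · exact Or.inr h
            · exact absurd (h ▸ hx) hiD
        · rintro ⟨S, U⟩ hP
          simp only [Finset.mem_product, Finset.mem_powersetCard] at hP
          obtain ⟨⟨hSA, hSm⟩, ⟨hUB, hUm⟩⟩ := hP
          have hSU_A : (S ∪ U ∪ {j}) ∩ A = S := by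
            ext x
            simp only [Finset.mem_inter, Finset.mem_union, Finset.mem_singleton]
            constructor
            · rintro ⟨(hx | hx) | rfl, hxA⟩
              · exact hx
              · exact absurd hxA (Finset.disjoint_right.1 hAB (hUB hx))
              · exact absurd hxA hjA
            · intro hx; exact ⟨Or.inl (Or.inl hx), hSA hx⟩
          have hSU_B : (S ∪ U ∪ {j}) ∩ B = U := by
            ext x
            simp only [Finset.mem_inter, Finset.mem_union, Finset.mem_singleton]
            constructor
            · rintro ⟨(hx | hx) | rfl, hxB⟩
              · exact absurd hxB (Finset.disjoint_left.1 hAB (hSA hx))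
              · exact hx
              · exact absurd hxB hjB
            · intro hx; exact ⟨Or.inl (Or.inr hx), hUB hx⟩
          rw [Prod.mk.injEq]
          exact ⟨hSU_A, hSU_B⟩
      rw [this, Finset.card_product, Finset.card_powersetCard, Finset.card_powersetCard]
    -- arithmetic conclusion
    rw [hcount]
    have hfac : ((A.card + B.card + 1).choose k : ℝ) * (k ! : ℝ) *
        ((A.card + B.card + 1 - k)! : ℝ) = ((A.card + B.card + 1)! : ℝ) := by
      exact_mod_cast congrArg (Nat.cast (R := ℝ))
        (Nat.choose_mul_factorial_mul_factorial (by omega : k ≤ A.card + B.card + 1))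
    have hn1 : Fintype.card α - 1 - k = A.card + B.card + 1 - k := by omega
    have hnfac : ((Fintype.card α)! : ℝ)
        = ((A.card : ℝ) + B.card + 2) * ((A.card + B.card + 1)! : ℝ) := by
      rw [hn]
      push_cast [Nat.factorial_succ]
      ring
    have hch : ((A.card + B.card + 1).choose k : ℝ) ≠ 0 := by
      exact_mod_cast (Nat.choose_pos (by omega : k ≤ A.card + B.card + 1)).ne'
    have hab2 : ((A.card : ℝ) + B.card + 2) ≠ 0 := by
      have h1 : (0:ℝ) ≤ A.card := Nat.cast_nonneg _
      have h2 : (0:ℝ) ≤ B.card := Nat.cast_nonneg _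
      exact ne_of_gt (by linarith)
    have hkf : ((k)! : ℝ) ≠ 0 := by positivity
    have hkf2 : (((A.card + B.card + 1 - k)!) : ℝ) ≠ 0 := by positivity
    rw [hn1, hnfac, ← hfac]
    push_cast
    field_simp
  · -- degenerate case
    push_neg at hma
    have hempty : IsEmpty {π : α ≃ Fin (Fintype.card α) //
        (A.filter (fun x => π x < π i)).card = (k - 1) / 2 ∧
        (B.filter (fun x => π x < π i)).card = (k - 1) / 2 ∧
        π j < π i} := by
      constructor
      rintro ⟨π, h1, h2, h3⟩
      have hA' : (A.filter (fun x => π x < π i)).card ≤ A.card :=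
        Finset.card_filter_le _ _
      have hB' : (B.filter (fun x => π x < π i)).card ≤ B.card :=
        Finset.card_filter_le _ _
      by_cases h : m ≤ A.card
      · have := hma h; omega
      · omega
    rw [Nat.card_of_isEmpty]
    have : (A.card.choose m : ℝ) * (B.card.choose m : ℝ) = 0 := by
      by_cases h : m ≤ A.card
      · have := hma h
        rw [Nat.choose_eq_zero_of_lt this]
        simp
      · rw [Nat.choose_eq_zero_of_lt (by omega)]
        simp
    rw [mul_assoc]
    rw [this]
    simp
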